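/- For every stationary policy π and every σ > 0: ‖V^π_σ − V^π‖_∞ ≤ γR·log|S| / ((1−γ)·σ) and ‖Q^π_σ − Q^π‖_∞ ≤ γR·log|S| / ((1−γ)·σ). -/

import Mathlib

set_option autoImplicit false

open Finset

/-- Log-sum-exp: `LSE(σ, V) = (1/σ)·log (∑ s, exp (σ · V s))`. -/
noncomputable def lse {S : Type*} [Fintype S] (σ : ℝ) (V : S → ℝ) : ℝ :=
  (1 / σ) * Real.log (∑ s, Real.exp (σ * V s))

lemma abs_sum_weighted {ι : Type*} [Fintype ι] (w f : ι → ℝ) (hw : ∀ i, 0 ≤ w i)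
    (hs : ∑ i, w i = 1) (D : ℝ) (hf : ∀ i, |f i| ≤ D) : |∑ i, w i * f i| ≤ D := by
  calc |∑ i, w i * f i| ≤ ∑ i, |w i * f i| := Finset.abs_sum_le_sum_abs _ _
    _ = ∑ i, w i * |f i| := by
        refine Finset.sum_congr rfl fun i _ => ?_
        rw [abs_mul, abs_of_nonneg (hw i)]
    _ ≤ ∑ i, w i * D := Finset.sum_le_sum (fun i _ => mul_le_mul_of_nonneg_left (hf i) (hw i))
    _ = D := by rw [← Finset.sum_mul, hs, one_mul]

lemma lse_bounds {S : Type*} [Fintype S] [Nonempty S] (σ : ℝ) (hσ : 0 < σ) (V : S → ℝ) :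
    univ.sup' univ_nonempty V ≤ lse σ V ∧
      lse σ V ≤ univ.sup' univ_nonempty V + Real.log (Fintype.card S) / σ := by
  set M := univ.sup' univ_nonempty V with hM
  have hpos : 0 < ∑ s, Real.exp (σ * V s) :=
    Finset.sum_pos (fun _ _ => Real.exp_pos _) univ_nonempty
  have hlse : lse σ V = Real.log (∑ s, Real.exp (σ * V s)) / σ := by
    rw [lse, one_div_mul_eq_div]
  constructor
  · obtain ⟨s₀, -, hs₀⟩ := Finset.exists_mem_eq_sup' (univ_nonempty (α := S)) V
    have h1 : Real.exp (σ * M) ≤ ∑ s, Real.exp (σ * V s) := by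
      rw [hM, hs₀]
      exact Finset.single_le_sum (f := fun s => Real.exp (σ * V s))
        (fun s _ => (Real.exp_pos _).le) (mem_univ s₀)
    have h2 : σ * M ≤ Real.log (∑ s, Real.exp (σ * V s)) :=
      (Real.le_log_iff_exp_le hpos).mpr h1
    rw [hlse, le_div_iff₀ hσ]
    linarith
  · have h1 : ∑ s, Real.exp (σ * V s) ≤ (Fintype.card S : ℝ) * Real.exp (σ * M) := by
      calc ∑ s, Real.exp (σ * V s) ≤ ∑ _s : S, Real.exp (σ * M) :=
            Finset.sum_le_sum fun s _ => Real.exp_le_exp.mpr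
              (mul_le_mul_of_nonneg_left (Finset.le_sup' V (mem_univ s)) hσ.le)
        _ = (Fintype.card S : ℝ) * Real.exp (σ * M) := by
            rw [Finset.sum_const, card_univ, nsmul_eq_mul]
    have hcard : (0 : ℝ) < (Fintype.card S : ℝ) := by
      exact_mod_cast Fintype.card_pos
    have h2 : Real.log (∑ s, Real.exp (σ * V s)) ≤ Real.log (Fintype.card S) + σ * M := by
      calc Real.log (∑ s, Real.exp (σ * V s))
          ≤ Real.log ((Fintype.card S : ℝ) * Real.exp (σ * M)) := Real.log_le_log hpos h1
        _ = Real.log (Fintype.card S) + σ * M := by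
            rw [Real.log_mul hcard.ne' (Real.exp_ne_zero _), Real.log_exp]
    rw [hlse, div_le_iff₀ hσ]
    have h3 : (M + Real.log (Fintype.card S) / σ) * σ = σ * M + Real.log (Fintype.card S) := by
      field_simp
    rw [h3]; linarith

theorem stmt_2 {S A : Type*} [Fintype S] [Fintype A] [Nonempty S] [Nonempty A]
    (c : S → A → ℝ) (hc : ∀ s a, c s a ∈ Set.Icc (0 : ℝ) 1)
    (γ : ℝ) (hγ : γ ∈ Set.Ico (0 : ℝ) 1)
    (R : ℝ) (hR : R ∈ Set.Icc (0 : ℝ) 1)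
    (p : S → A → S → ℝ) (hp : ∀ s a, p s a ∈ stdSimplex ℝ S)
    (π : S → A → ℝ) (hπ : ∀ s, π s ∈ stdSimplex ℝ A)
    (σ : ℝ) (hσ : 0 < σ)
    (V Vσ : S → ℝ) (Q Qσ : S → A → ℝ)
    (hV : ∀ s, V s = ∑ a, π s a * (c s a + γ * (1 - R) * ∑ s', p s a s' * V s'
      + γ * R * univ.sup' univ_nonempty V))
    (hVσ : ∀ s, Vσ s = ∑ a, π s a * (c s a + γ * (1 - R) * ∑ s', p s a s' * Vσ s'
      + γ * R * lse σ Vσ))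
    (hQ : ∀ s a, Q s a = c s a + γ * (1 - R) * ∑ s', p s a s' * V s'
      + γ * R * univ.sup' univ_nonempty V)
    (hQσ : ∀ s a, Qσ s a = c s a + γ * (1 - R) * ∑ s', p s a s' * Vσ s'
      + γ * R * lse σ Vσ) :
    ‖Vσ - V‖ ≤ γ * R * Real.log (Fintype.card S) / ((1 - γ) * σ) ∧
      ‖Qσ - Q‖ ≤ γ * R * Real.log (Fintype.card S) / ((1 - γ) * σ) := by
  set L := Real.log (Fintype.card S) with hLdef
  set M := univ.sup' univ_nonempty V with hMdef
  set Mσ := univ.sup' univ_nonempty Vσ with hMσdef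
  set D := ‖Vσ - V‖ with hDdef
  set K := γ * R * L / ((1 - γ) * σ) with hKdef
  have hγ0 : 0 ≤ γ := hγ.1
  have h1γ : 0 < 1 - γ := by linarith [hγ.2]
  have hR0 : 0 ≤ R := hR.1
  have h1R : 0 ≤ 1 - R := by linarith [hR.2]
  have hL : 0 ≤ L := Real.log_nonneg (by exact_mod_cast Fintype.card_pos)
  have hD0 : 0 ≤ D := norm_nonneg _
  have hDpt : ∀ s, |Vσ s - V s| ≤ D := by
    intro s
    have := norm_le_pi_norm (Vσ - V) s
    simpa [Real.norm_eq_abs] using this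
  have hMσ1 : Mσ ≤ M + D := by
    apply Finset.sup'_le
    intro s _
    have := hDpt s
    have h2 := Finset.le_sup' V (mem_univ s)
    rw [abs_le] at this
    rw [← hMdef] at h2
    linarith [this.1]
  have hMσ2 : M ≤ Mσ + D := by
    apply Finset.sup'_le
    intro s _
    have := hDpt s
    have h2 := Finset.le_sup' Vσ (mem_univ s)
    rw [abs_le] at this
    rw [← hMσdef] at h2
    linarith [this.2]
  obtain ⟨hlse1, hlse2⟩ := lse_bounds σ hσ Vσ
  rw [← hLdef] at hlse2
  have hE : |lse σ Vσ - M| ≤ L / σ + D := by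
    rw [abs_le]
    have : 0 ≤ L / σ := div_nonneg hL hσ.le
    constructor <;> linarith
  have hinner : ∀ s a, |∑ s', p s a s' * (Vσ s' - V s')| ≤ D := fun s a =>
    abs_sum_weighted _ _ (hp s a).1 (hp s a).2 D (fun s' => hDpt s')
  have hterm : ∀ s a, |γ * (1 - R) * (∑ s', p s a s' * (Vσ s' - V s'))
      + γ * R * (lse σ Vσ - M)| ≤ γ * (1 - R) * D + γ * R * (L / σ + D) := by
    intro s a
    calc |γ * (1 - R) * (∑ s', p s a s' * (Vσ s' - V s')) + γ * R * (lse σ Vσ - M)|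
        ≤ |γ * (1 - R) * (∑ s', p s a s' * (Vσ s' - V s'))| + |γ * R * (lse σ Vσ - M)| :=
          abs_add_le _ _
      _ = γ * (1 - R) * |∑ s', p s a s' * (Vσ s' - V s')| + γ * R * |lse σ Vσ - M| := by
          simp only [abs_mul, abs_of_nonneg hγ0, abs_of_nonneg h1R, abs_of_nonneg hR0]
      _ ≤ γ * (1 - R) * D + γ * R * (L / σ + D) := by
          have h1 := hinner s a
          have h2 := hE
          have n1 : 0 ≤ γ * (1 - R) := mul_nonneg hγ0 h1R
          have n2 : 0 ≤ γ * R := mul_nonneg hγ0 hR0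
          nlinarith
  have hkey : ∀ s, Vσ s - V s = ∑ a, π s a *
      (γ * (1 - R) * (∑ s', p s a s' * (Vσ s' - V s')) + γ * R * (lse σ Vσ - M)) := by
    intro s
    rw [hVσ s, hV s, ← Finset.sum_sub_distrib]
    refine Finset.sum_congr rfl fun a _ => ?_
    have hsub : ∑ s', p s a s' * (Vσ s' - V s')
        = (∑ s', p s a s' * Vσ s') - ∑ s', p s a s' * V s' := by
      rw [← Finset.sum_sub_distrib]
      exact Finset.sum_congr rfl fun s' _ => by ring
    rw [hsub]
    ring
  have hDle : D ≤ γ * D + γ * R * (L / σ) := by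
    have hrhs : 0 ≤ γ * D + γ * R * (L / σ) :=
      add_nonneg (mul_nonneg hγ0 hD0)
        (mul_nonneg (mul_nonneg hγ0 hR0) (div_nonneg hL hσ.le))
    rw [hDdef, pi_norm_le_iff_of_nonneg hrhs]
    intro s
    rw [Pi.sub_apply, Real.norm_eq_abs, hkey s]
    calc |∑ a, π s a * (γ * (1 - R) * (∑ s', p s a s' * (Vσ s' - V s'))
            + γ * R * (lse σ Vσ - M))|
        ≤ γ * (1 - R) * D + γ * R * (L / σ + D) :=
          abs_sum_weighted _ _ (hπ s).1 (hπ s).2 _ (hterm s)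
      _ = γ * D + γ * R * (L / σ) := by ring
  have hKeq : K = (γ * R * (L / σ)) / (1 - γ) := by
    rw [hKdef, mul_comm (1 - γ) σ, ← div_div, mul_div_assoc]
  have hDK : D ≤ K := by
    rw [hKeq, le_div_iff₀ h1γ]
    linarith
  have hK0 : 0 ≤ K := le_trans hD0 hDK
  refine ⟨hDK, ?_⟩
  have hsplit : γ * R * (L / σ) = (1 - γ) * K := by
    rw [hKeq, mul_comm (1 - γ), div_mul_cancel₀ _ h1γ.ne']
  rw [pi_norm_le_iff_of_nonneg hK0]
  intro s
  rw [pi_norm_le_iff_of_nonneg hK0]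
  intro a
  rw [Pi.sub_apply, Pi.sub_apply, Real.norm_eq_abs]
  have hQdiff : Qσ s a - Q s a = γ * (1 - R) * (∑ s', p s a s' * (Vσ s' - V s'))
      + γ * R * (lse σ Vσ - M) := by
    rw [hQσ s a, hQ s a]
    have hsub : ∑ s', p s a s' * (Vσ s' - V s')
        = (∑ s', p s a s' * Vσ s') - ∑ s', p s a s' * V s' := by
      rw [← Finset.sum_sub_distrib]
      exact Finset.sum_congr rfl fun s' _ => by ring
    rw [hsub]
    ring
  rw [hQdiff]
  have h1 := hterm s a
  have hγK : γ * D ≤ γ * K := mul_le_mul_of_nonneg_left hDK hγ0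
  calc |γ * (1 - R) * (∑ s', p s a s' * (Vσ s' - V s')) + γ * R * (lse σ Vσ - M)|
      ≤ γ * (1 - R) * D + γ * R * (L / σ + D) := h1
    _ = γ * D + γ * R * (L / σ) := by ring
    _ ≤ γ * K + (1 - γ) * K := by rw [← hsplit]; linarith
    _ = K := by ring
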